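/- If λ ∈ Γ_k^+ and σ_{k+1}(λ) > 0, then Σ_i σ_{k-1}(λ_i)·λ_i² / σ_k(λ) ≥ (k/n)·σ_1(λ), where λ_i inside σ_{k-1} denotes deletion of the i-th coordinate. -/

import Mathlib

open Finset

noncomputable def esymm (n k : ℕ) (x : Fin n → ℝ) : ℝ :=
  ∑ s ∈ (Finset.univ : Finset (Fin n)).powersetCard k, ∏ i ∈ s, x i

/-- σ_{k}(λ with i-th coordinate deleted) -/
noncomputable def esymmDel (n k : ℕ) (x : Fin n → ℝ) (i : Fin n) : ℝ :=
  ∑ s ∈ ((Finset.univ : Finset (Fin n)).erase i).powersetCard k, ∏ j ∈ s, x j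

def GammaPlus (n k : ℕ) : Set (Fin n → ℝ) :=
  {x | ∀ j : ℕ, 1 ≤ j → j ≤ k → 0 < esymm n j x}

open Polynomial

lemma esymm_zero (n : ℕ) (x : Fin n → ℝ) : esymm n 0 x = 1 := by
  simp [esymm]

lemma esymm_one (n : ℕ) (x : Fin n → ℝ) : esymm n 1 x = ∑ i : Fin n, x i := by
  rw [esymm, Finset.powersetCard_one, Finset.sum_map]
  simp

lemma esymm_eq_zero (n r : ℕ) (h : n < r) (x : Fin n → ℝ) : esymm n r x = 0 := by
  rw [esymm, Finset.powersetCard_eq_empty.2 (by simpa using h), Finset.sum_empty]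

lemma esymm_split (n j : ℕ) (x : Fin n → ℝ) (i : Fin n) :
    esymm n (j+1) x = esymmDel n (j+1) x i + x i * esymmDel n j x i := by
  classical
  have hnot : i ∉ (Finset.univ : Finset (Fin n)).erase i := Finset.notMem_erase _ _
  have huniv : (Finset.univ : Finset (Fin n)) = insert i (Finset.univ.erase i) := by
    rw [Finset.insert_erase (Finset.mem_univ i)]
  rw [esymm, huniv, Finset.powersetCard_succ_insert hnot, Finset.sum_union, esymmDel, esymmDel]
  · congr 1
    rw [Finset.sum_image, Finset.mul_sum]
    · refine Finset.sum_congr rfl fun s hs => ?_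
      rw [Finset.mem_powersetCard] at hs
      have : i ∉ s := fun h => hnot (hs.1 h)
      rw [Finset.prod_insert this, mul_comm]
    · intro s hs t ht hst
      rw [Finset.mem_coe, Finset.mem_powersetCard] at hs ht
      have his : i ∉ s := fun h => hnot (hs.1 h)
      have hit : i ∉ t := fun h => hnot (ht.1 h)
      rw [← Finset.erase_insert his, ← Finset.erase_insert hit, hst]
  · rw [Finset.disjoint_right]
    rintro s hs hs2
    rw [Finset.mem_image] at hs
    obtain ⟨t, _, rfl⟩ := hs
    rw [Finset.mem_powersetCard] at hs2
    exact hnot (hs2.1 (Finset.mem_insert_self i t))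

lemma erase_powersetCard (n r : ℕ) (i : Fin n) :
    ((Finset.univ : Finset (Fin n)).erase i).powersetCard r
      = ((Finset.univ : Finset (Fin n)).powersetCard r).filter (fun s => i ∉ s) := by
  ext s
  simp only [Finset.mem_powersetCard, Finset.mem_filter, Finset.subset_erase]
  tauto

lemma sum_esymmDel (n r : ℕ) (x : Fin n → ℝ) :
    ∑ i : Fin n, esymmDel n r x i = ((n : ℝ) - r) * esymm n r x := by
  classical
  have : ∀ i : Fin n, esymmDel n r x i
      = ∑ s ∈ (Finset.univ : Finset (Fin n)).powersetCard r,
          if i ∉ s then ∏ j ∈ s, x j else 0 := by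
    intro i
    rw [esymmDel, erase_powersetCard, Finset.sum_filter]
  simp_rw [this]
  rw [Finset.sum_comm, esymm, Finset.mul_sum]
  refine Finset.sum_congr rfl fun s hs => ?_
  rw [Finset.mem_powersetCard] at hs
  have hcard : s.card = r := hs.2
  have hrn : r ≤ n := by
    simpa [hcard] using Finset.card_le_card hs.1 |>.trans (by simp)
  rw [Finset.sum_ite, Finset.sum_const, Finset.sum_const_zero, add_zero]
  have : Finset.univ.filter (fun i => i ∉ s) = sᶜ := by
    ext j; simp [Finset.mem_compl]
  rw [this, Finset.card_compl, hcard, Fintype.card_fin, nsmul_eq_mul, Nat.cast_sub hrn]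

lemma sum_x_esymmDel (n j : ℕ) (x : Fin n → ℝ) :
    ∑ i : Fin n, x i * esymmDel n j x i = (j + 1 : ℝ) * esymm n (j+1) x := by
  have h1 : ∀ i : Fin n, x i * esymmDel n j x i
      = esymm n (j+1) x - esymmDel n (j+1) x i := by
    intro i; rw [esymm_split n j x i]; ring
  simp_rw [h1]
  rw [Finset.sum_sub_distrib, Finset.sum_const, sum_esymmDel, Finset.card_univ,
    Fintype.card_fin, nsmul_eq_mul]
  push_cast
  ring

lemma key_identity (n k' : ℕ) (x : Fin n → ℝ) :
    ∑ i : Fin n, esymmDel n k' x i * (x i)^2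
      = esymm n 1 x * esymm n (k'+1) x - (k' + 2 : ℝ) * esymm n (k'+2) x := by
  have h1 : ∀ i : Fin n, esymmDel n k' x i * (x i)^2
      = x i * esymm n (k'+1) x - x i * esymmDel n (k'+1) x i := by
    intro i; rw [esymm_split n k' x i]; ring
  simp_rw [h1]
  rw [Finset.sum_sub_distrib, ← Finset.sum_mul, sum_x_esymmDel, ← esymm_one]
  push_cast
  ring


lemma splits_deriv (p : ℝ[X]) (hp : p.Splits) :
    (Polynomial.derivative p).Splits := by
  rcases eq_or_ne p.natDegree 0 with h0 | h0
  · rw [Polynomial.eq_C_of_natDegree_eq_zero h0, Polynomial.derivative_C]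
    exact Polynomial.Splits.zero
  rw [Polynomial.splits_iff_card_roots] at hp ⊢
  have h1 := Polynomial.card_roots_le_derivative p
  have h2 := Polynomial.card_roots' (Polynomial.derivative p)
  have h3 := Polynomial.natDegree_derivative_le p
  omega

lemma splits_iter_deriv (p : ℝ[X]) (hp : p.Splits) (s : ℕ) :
    (Polynomial.derivative^[s] p).Splits := by
  induction s with
  | zero => simpa
  | succ t ih => rw [Function.iterate_succ_apply']; exact splits_deriv _ ih

lemma splits_reverse (p : ℝ[X]) (hp : p.Splits) :
    p.reverse.Splits := by
  rcases eq_or_ne p 0 with rfl | h0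
  · simpa using Polynomial.Splits.zero
  have hfac := hp.eq_prod_roots
  have haux : ∀ (m : Multiset ℝ),
      ((m.map fun a => X - C a).prod.reverse).Splits := by
    intro m
    induction m using Multiset.induction with
    | empty =>
        simp only [Multiset.map_zero, Multiset.prod_zero]
        have : (1 : ℝ[X]).reverse = 1 := by
          simp [Polynomial.reverse]
        rw [this]
        exact Polynomial.Splits.one
    | cons a t ih =>
        rw [Multiset.map_cons, Multiset.prod_cons, Polynomial.reverse_mul_of_domain]
        apply Polynomial.Splits.mul
        · apply Polynomial.Splits.of_degree_le_one
          have h1 : (X - C a).reverse.natDegree ≤ 1 := by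
            refine le_trans (Polynomial.reverse_natDegree_le _) ?_
            simp [Polynomial.natDegree_X_sub_C]
          exact_mod_cast Polynomial.natDegree_le_iff_degree_le.mp h1
        · exact ih
  rw [hfac, Polynomial.reverse_mul_of_domain]
  apply Polynomial.Splits.mul
  · apply Polynomial.Splits.of_degree_le_one
    have h1 : (C p.leadingCoeff).reverse.natDegree ≤ 1 := by
      refine le_trans (Polynomial.reverse_natDegree_le _) ?_
      simp
    exact_mod_cast Polynomial.natDegree_le_iff_degree_le.mp h1
  · exact haux _

lemma discrim_of_splits (p : ℝ[X]) (h2 : p.natDegree ≤ 2)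
    (hs : p.Splits) :
    4 * p.coeff 2 * p.coeff 0 ≤ p.coeff 1 ^ 2 := by
  rcases eq_or_ne (p.coeff 2) 0 with h | h
  · rw [h]; nlinarith [sq_nonneg (p.coeff 1)]
  have hdeg : p.natDegree = 2 := le_antisymm h2 (Polynomial.le_natDegree_of_ne_zero h)
  have hd0 : p.degree ≠ 0 := by
    rw [Polynomial.degree_eq_natDegree (fun hh => by simp [hh] at h), hdeg]
    norm_num
  obtain ⟨z, hz⟩ := hs.exists_eval_eq_zero hd0
  have hz' : p.eval z = 0 := hz
  have heval : p.coeff 0 + p.coeff 1 * z + p.coeff 2 * z ^ 2 = 0 := by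
    have h3 := Polynomial.eval_eq_sum_range (p := p) (x := z)
    rw [hdeg, hz'] at h3
    simp [Finset.sum_range_succ] at h3
    linarith
  have key : p.coeff 1 ^ 2 - 4 * p.coeff 2 * p.coeff 0
      = (2 * p.coeff 2 * z + p.coeff 1) ^ 2 := by
    have hc0 : p.coeff 0 = -(p.coeff 1 * z + p.coeff 2 * z ^ 2) := by linarith
    rw [hc0]; ring
  nlinarith [sq_nonneg (2 * p.coeff 2 * z + p.coeff 1), key]

lemma desc_mul_fact (u v : ℕ) : (u + v).descFactorial v * u.factorial = (u + v).factorial := by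
  induction v with
  | zero => simp
  | succ w ih =>
      rw [show u + (w + 1) = (u + w) + 1 from rfl, Nat.succ_descFactorial_succ,
        Nat.factorial_succ, mul_assoc, ih]

lemma newton_ineq (a c : ℕ) (y : Fin (a + c + 2) → ℝ) :
    esymm (a+c+2) a y * esymm (a+c+2) (a+2) y *
      ((a.factorial * (c+2).factorial * ((a+2).factorial * c.factorial) : ℕ) : ℝ)
      ≤ esymm (a+c+2) (a+1) y ^ 2 * (((a+1).factorial * (c+1).factorial : ℕ) : ℝ) ^ 2 := by
  set P : ℝ[X] := ∏ i : Fin (a + c + 2), (X + C (y i)) with hP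
  have hcoeffP : ∀ r : ℕ, r ≤ (a + c + 2) → P.coeff r = esymm (a + c + 2) ((a + c + 2) - r) y := by
    intro r hr
    rw [hP, Finset.prod_X_add_C_coeff _ _ (by simpa using hr), esymm]
    congr 1
    simp
  have hsplitP : P.Splits := Polynomial.Splits.prod
    (fun i _ => Polynomial.Splits.of_degree_le_one (by rw [Polynomial.degree_X_add_C]))
  have hdegP : P.natDegree = (a + c + 2) := by
    rw [hP, Polynomial.natDegree_prod_of_monic _ _ (fun i _ => Polynomial.monic_X_add_C _)]
    simp [Polynomial.natDegree_X_add_C]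
  set P₁ : ℝ[X] := Polynomial.derivative^[c] P with hP₁
  have hsplit₁ : P₁.Splits := splits_iter_deriv _ hsplitP c
  have hcoeff₁ : ∀ r : ℕ, r ≤ a + 2 →
      P₁.coeff r = ((r + c).descFactorial c : ℝ) * esymm (a + c + 2) (a + 2 - r) y := by
    intro r hr
    rw [hP₁, Polynomial.coeff_iterate_derivative, hcoeffP (r + c) (by omega), nsmul_eq_mul]
    congr 2
    omega
  have hdeg₁ : P₁.natDegree = a + 2 := by
    have hle : P₁.natDegree ≤ a + 2 := by
      have h := Polynomial.natDegree_iterate_derivative P c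
      rw [← hP₁, hdegP] at h
      omega
    refine le_antisymm hle (Polynomial.le_natDegree_of_ne_zero ?_)
    rw [hcoeff₁ (a+2) le_rfl, show a + 2 - (a + 2) = 0 from by omega, esymm_zero, mul_one]
    have hpos : 0 < (a + 2 + c).descFactorial c := by
      have h := desc_mul_fact (a + 2) c
      by_contra hz
      push_neg at hz
      interval_cases h2 : (a + 2 + c).descFactorial c
      · simp [h2] at h
        exact Nat.factorial_ne_zero _ h.symm
    exact_mod_cast hpos.ne'
  set P₂ : ℝ[X] := P₁.reverse with hP₂
  have hsplit₂ : P₂.Splits := splits_reverse _ hsplit₁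
  have hcoeff₂ : ∀ r : ℕ, r ≤ a + 2 → P₂.coeff r = P₁.coeff (a + 2 - r) := by
    intro r hr
    rw [hP₂, Polynomial.coeff_reverse, hdeg₁, Polynomial.revAt_le hr]
  set P₃ : ℝ[X] := Polynomial.derivative^[a] P₂ with hP₃
  have hsplit₃ : P₃.Splits := splits_iter_deriv _ hsplit₂ a
  have hdeg₃ : P₃.natDegree ≤ 2 := by
    have h1 := Polynomial.natDegree_iterate_derivative P₂ a
    have h2 := Polynomial.reverse_natDegree_le P₁
    rw [← hP₃] at h1
    rw [← hP₂] at h2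
    omega
  have hdisc := discrim_of_splits P₃ hdeg₃ hsplit₃
  have hc3 : ∀ r : ℕ, r ≤ 2 →
      P₃.coeff r = ((r + a).descFactorial a : ℝ) * P₁.coeff (a + 2 - (r + a)) := by
    intro r hr
    rw [hP₃, Polynomial.coeff_iterate_derivative, nsmul_eq_mul, hcoeff₂ (r + a) (by omega)]
  rw [hc3 0 (by omega), hc3 1 (by omega), hc3 2 (by omega)] at hdisc
  rw [show a + 2 - (0 + a) = 2 from by omega, show a + 2 - (1 + a) = 1 from by omega,
    show a + 2 - (2 + a) = 0 from by omega] at hdisc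
  rw [hcoeff₁ 0 (by omega), hcoeff₁ 1 (by omega), hcoeff₁ 2 (by omega)] at hdisc
  rw [show a + 2 - 0 = a + 2 from by omega, show a + 2 - 1 = a + 1 from by omega,
    show a + 2 - 2 = a from by omega] at hdisc
  -- convert descFactorials to factorials
  have f0a : ((0 + a).descFactorial a : ℝ) = (a.factorial : ℝ) := by
    norm_cast
    rw [Nat.zero_add, Nat.descFactorial_self]
  have f0c : ((0 + c).descFactorial c : ℝ) = (c.factorial : ℝ) := by
    norm_cast
    rw [Nat.zero_add, Nat.descFactorial_self]
  have f1a : ((1 + a).descFactorial a : ℝ) = ((a+1).factorial : ℝ) := by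
    have := desc_mul_fact 1 a
    simp [Nat.factorial_one] at this
    norm_cast
    rw [this]
    congr 1
    omega
  have f1c : ((1 + c).descFactorial c : ℝ) = ((c+1).factorial : ℝ) := by
    have := desc_mul_fact 1 c
    simp [Nat.factorial_one] at this
    norm_cast
    rw [this]
    congr 1
    omega
  have f2a : ((2 + a).descFactorial a : ℝ) = ((a+2).factorial : ℝ) / 2 := by
    have h := desc_mul_fact 2 a
    have : ((2 + a).descFactorial a : ℝ) * 2 = ((2 + a).factorial : ℝ) := by
      exact_mod_cast congrArg (Nat.cast : ℕ → ℝ) (by simpa [Nat.factorial_two] using h)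
    rw [show a + 2 = 2 + a from by omega]
    linarith
  have f2c : ((2 + c).descFactorial c : ℝ) = ((c+2).factorial : ℝ) / 2 := by
    have h := desc_mul_fact 2 c
    have : ((2 + c).descFactorial c : ℝ) * 2 = ((2 + c).factorial : ℝ) := by
      exact_mod_cast congrArg (Nat.cast : ℕ → ℝ) (by simpa [Nat.factorial_two] using h)
    rw [show c + 2 = 2 + c from by omega]
    linarith
  rw [f0a, f0c, f1a, f1c, f2a, f2c] at hdisc
  push_cast
  ring_nf at hdisc ⊢
  linarith [hdisc]


lemma newton_q (n : ℕ) (x : Fin n → ℝ) (j : ℕ) (h1 : 1 ≤ j) (h2 : j + 1 ≤ n) :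
    esymm n (j+1) x * (((j+1).factorial * (n-(j+1)).factorial : ℕ) : ℝ)
      * (esymm n (j-1) x * (((j-1).factorial * (n-(j-1)).factorial : ℕ) : ℝ))
      ≤ (esymm n j x * ((j.factorial * (n-j).factorial : ℕ) : ℝ)) ^ 2 := by
  obtain ⟨a, rfl⟩ : ∃ a, j = a + 1 := ⟨j - 1, by omega⟩
  obtain ⟨c, rfl⟩ : ∃ c, n = a + c + 2 := ⟨n - a - 2, by omega⟩
  have h := newton_ineq a c x
  rw [show a + 1 + 1 = a + 2 from rfl, show a + 1 - 1 = a from rfl,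
      show a + c + 2 - (a + 2) = c from by omega,
      show a + c + 2 - a = c + 2 from by omega,
      show a + c + 2 - (a + 1) = c + 1 from by omega]
  push_cast at h ⊢
  ring_nf at h ⊢
  linarith [h]

lemma chain_abs (N : ℝ) (q : ℕ → ℝ) (K : ℕ) (hK : 1 ≤ K) (hN : 0 ≤ N)
    (hq0 : q 0 = N) (hqpos : ∀ r, 1 ≤ r → r ≤ K + 1 → 0 < q r)
    (hnewton : ∀ j, 1 ≤ j → j ≤ K → q (j+1) * q (j-1) ≤ q j ^ 2) :
    N * q (K+1) ≤ q 1 * q K := by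
  induction K with
  | zero => omega
  | succ s ih =>
      rcases Nat.eq_zero_or_pos s with rfl | hs
      · have h := hnewton 1 le_rfl le_rfl
        rw [show (1:ℕ) - 1 = 0 from rfl, hq0] at h
        nlinarith [h]
      · have hih := ih hs (fun r h1 h2 => hqpos r h1 (by omega))
          (fun j h1 h2 => hnewton j h1 (by omega))
        have h1 := hnewton (s+1) (by omega) le_rfl
        rw [show s + 1 - 1 = s from rfl] at h1
        have hp : 0 < q s := hqpos s hs (by omega)
        have hp1 : 0 < q (s+1) := hqpos (s+1) (by omega) (by omega)
        nlinarith [mul_le_mul_of_nonneg_left h1 hN,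
          mul_le_mul_of_nonneg_left hih (le_of_lt hp1), hp, hp1]



theorem stmt_10 (n k : ℕ) (hk : 1 ≤ k) (hkn : k ≤ n) (x : Fin n → ℝ)
    (hx : x ∈ GammaPlus n k) (hk1 : 0 < esymm n (k + 1) x) :
    (∑ i : Fin n, esymmDel n (k - 1) x i * (x i) ^ 2) / esymm n k x
      ≥ ((k : ℝ) / n) * esymm n 1 x := by
  have hkn1 : k + 1 ≤ n := by
    by_contra h
    push_neg at h
    rw [esymm_eq_zero n (k+1) (by omega) x] at hk1
    exact lt_irrefl 0 hk1
  obtain ⟨k', rfl⟩ : ∃ k', k = k' + 1 := ⟨k - 1, by omega⟩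
  obtain ⟨c, rfl⟩ : ∃ c, n = k' + c + 2 := ⟨n - k' - 2, by omega⟩
  have hσk : 0 < esymm (k' + c + 2) (k'+1) x := hx (k'+1) (by omega) le_rfl
  have hσ1 : 0 < esymm (k' + c + 2) 1 x := hx 1 le_rfl (by omega)
  -- the MacLaurin-type inequality
  have hchain := chain_abs ((((k' + c + 2)).factorial : ℝ))
      (fun r => esymm (k' + c + 2) r x * ((r.factorial * ((k' + c + 2) - r).factorial : ℕ) : ℝ)) (k'+1)
      (by omega) (by positivity)
      (by simp [esymm_zero])
      (by
        intro r h1 h2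
        have hes : 0 < esymm (k' + c + 2) r x := by
          rcases Nat.lt_or_ge r (k'+2) with h | h
          · exact hx r h1 (by omega)
          · have : r = k' + 2 := by omega
            rw [this]; exact hk1
        have hf : (0:ℝ) < ((r.factorial * ((k' + c + 2) - r).factorial : ℕ) : ℝ) := by
          exact_mod_cast Nat.mul_pos (Nat.factorial_pos r) (Nat.factorial_pos ((k' + c + 2) - r))
        exact mul_pos hes hf)
      (by
        intro j h1 h2
        exact newton_q (k' + c + 2) x j h1 (by omega))
  rw [show k' + 1 + 1 = k' + 2 from rfl, show (k' + c + 2) - (k'+2) = c from by omega,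
    show (k' + c + 2) - 1 = k' + c + 1 from by omega, show (k' + c + 2) - (k'+1) = c + 1 from by omega,
    Nat.factorial_one, one_mul] at hchain
  have hmain : ((k'+2) : ℝ) * ((k'+c+2) : ℝ) * esymm (k' + c + 2) (k'+2) x
      ≤ ((c+1) : ℝ) * (esymm (k' + c + 2) 1 x * esymm (k' + c + 2) (k'+1) x) := by
    have hpos3 : (0:ℝ) < ((k'+c+1).factorial : ℝ)
        * (((k'+1).factorial : ℝ) * (c.factorial : ℝ)) := by positivity
    rw [← mul_le_mul_iff_of_pos_right hpos3]
    have e1 : ((k'+c+2).factorial : ℝ) = ((k'+c+2) : ℝ) * ((k'+c+1).factorial : ℝ) := by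
      exact_mod_cast congrArg (Nat.cast : ℕ → ℝ) (Nat.factorial_succ (k'+c+1))
    have e2 : (((k'+2).factorial : ℕ) : ℝ) = ((k'+2) : ℝ) * ((k'+1).factorial : ℝ) := by
      exact_mod_cast congrArg (Nat.cast : ℕ → ℝ) (Nat.factorial_succ (k'+1))
    have e3 : (((c+1).factorial : ℕ) : ℝ) = ((c+1) : ℝ) * (c.factorial : ℝ) := by
      exact_mod_cast congrArg (Nat.cast : ℕ → ℝ) (Nat.factorial_succ c)
    calc ((k'+2) : ℝ) * ((k'+c+2) : ℝ) * esymm (k' + c + 2) (k'+2) x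
          * (((k'+c+1).factorial : ℝ) * (((k'+1).factorial : ℝ) * (c.factorial : ℝ)))
        = (((k' + c + 2)).factorial : ℝ) * (esymm (k' + c + 2) (k'+2) x * (((k'+2).factorial * c.factorial : ℕ) : ℝ)) := by
          push_cast [e1, e2]; ring
      _ ≤ (esymm (k' + c + 2) 1 x * (((k'+c+1).factorial : ℕ) : ℝ))
            * (esymm (k' + c + 2) (k'+1) x * (((k'+1).factorial * (c+1).factorial : ℕ) : ℝ)) := hchain
      _ = ((c+1) : ℝ) * (esymm (k' + c + 2) 1 x * esymm (k' + c + 2) (k'+1) x)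
          * (((k'+c+1).factorial : ℝ) * (((k'+1).factorial : ℝ) * (c.factorial : ℝ))) := by
          push_cast [e3]; ring
  rw [ge_iff_le, le_div_iff₀ hσk, show k' + 1 - 1 = k' from rfl, key_identity (k' + c + 2) k' x]
  have hnpos : (0:ℝ) < ((k'+c+2 : ℕ) : ℝ) := by positivity
  push_cast at hmain ⊢
  rw [div_mul_eq_mul_div, div_mul_eq_mul_div, div_le_iff₀ (by positivity)]
  nlinarith [hmain, hσ1, hσk]
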